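/- Let n ≥ 1, let V : ℝ → Matrix (Fin n) (Fin n) ℝ, let E ∈ ℝ, and let Y, Y₁ : ℝ → Matrix (Fin n) (Fin n) ℝ be such that Y has derivative Y₁(x) at every x, Y₁ has derivative (V(x₀) − E•I)·Y(x₀) at the point x₀, and Y₁(x₀) is invertible. Then the map Ψ : x ↦ Y(x)·(Y₁(x))⁻¹ is differentiable at x₀ with derivative Ψ'(x₀) = I − Ψ(x₀)·(V(x₀) − E•I)·Ψ(x₀). (This is the matrix Riccati differential equation satisfied by the inverse logarithmic derivative of a solution of the coupled-channel Schrödinger equation Y'' = (V(x) − E·I)Y.) -/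

import Mathlib

attribute [local instance] Matrix.normedAddCommGroup Matrix.normedSpace

section helpers

variable {n : ℕ}

private lemma entry_hasDerivAt {f : ℝ → Matrix (Fin n) (Fin n) ℝ}
    {f' : Matrix (Fin n) (Fin n) ℝ} {x₀ : ℝ}
    (hf : HasDerivAt f f' x₀) (i j : Fin n) :
    HasDerivAt (fun x => f x i j) (f' i j) x₀ :=
  hasDerivAt_pi.mp (hasDerivAt_pi.mp hf i) j

private lemma matmul_hasDerivAt {f g : ℝ → Matrix (Fin n) (Fin n) ℝ}
    {f' g' : Matrix (Fin n) (Fin n) ℝ} {x₀ : ℝ}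
    (hf : HasDerivAt f f' x₀) (hg : HasDerivAt g g' x₀) :
    HasDerivAt (fun x => f x * g x) (f' * g x₀ + f x₀ * g') x₀ := by
  refine hasDerivAt_pi.mpr ?_; intro i; rw [hasDerivAt_pi]; intro j
  have h : HasDerivAt (fun x => ∑ k, f x i k * g x k j)
      (∑ k, (f' i k * g x₀ k j + f x₀ i k * g' k j)) x₀ :=
    HasDerivAt.fun_sum fun k _ => (entry_hasDerivAt hf i k).mul (entry_hasDerivAt hg k j)
  convert h using 1
  · rfl
  · rfl
  · funext x; simp [Matrix.mul_apply]
  simp [Matrix.mul_apply, Matrix.add_apply, Finset.sum_add_distrib]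

private lemma det_differentiableAt {M : ℝ → Matrix (Fin n) (Fin n) ℝ} {x₀ : ℝ}
    (h : ∀ i j, DifferentiableAt ℝ (fun x => M x i j) x₀) :
    DifferentiableAt ℝ (fun x => (M x).det) x₀ := by
  simp only [Matrix.det_apply']
  exact DifferentiableAt.fun_sum fun σ _ =>
    ((DifferentiableAt.fun_finsetProd fun i _ => h (σ i) i).const_mul _)

private lemma inv_differentiableAt {f : ℝ → Matrix (Fin n) (Fin n) ℝ} {x₀ : ℝ}
    (h : ∀ i j, DifferentiableAt ℝ (fun x => f x i j) x₀)
    (hdet : (f x₀).det ≠ 0) :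
    DifferentiableAt ℝ (fun x => (f x)⁻¹) x₀ := by
  refine differentiableAt_pi.mpr ?_; intro i; rw [differentiableAt_pi]; intro j
  have heq : ∀ x, (f x)⁻¹ i j = ((f x).det)⁻¹ * (f x).adjugate i j := by
    intro x
    rw [Matrix.inv_def, Matrix.smul_apply, Ring.inverse_eq_inv', smul_eq_mul]
  simp only [heq]
  apply DifferentiableAt.mul
  · exact (det_differentiableAt h).inv hdet
  · simp only [Matrix.adjugate_apply]
    apply det_differentiableAt
    intro a b
    by_cases hab : a = j
    · subst hab
      simp only [Matrix.updateRow_self]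
      exact differentiableAt_const _
    · simp only [Matrix.updateRow_ne hab]
      exact h a b

end helpers

/-- The inverse logarithmic derivative `Ψ = Y·(Y')⁻¹` of a solution of the
coupled-channel Schrödinger equation `Y'' = (V(x) - E·I)·Y` satisfies the
matrix Riccati equation `Ψ' = I - Ψ·(V - E·I)·Ψ`. -/
theorem riccati_of_schrodinger (n : ℕ) (hn : 1 ≤ n)
    (V : ℝ → Matrix (Fin n) (Fin n) ℝ) (E : ℝ)
    (Y Y₁ : ℝ → Matrix (Fin n) (Fin n) ℝ) (x₀ : ℝ)
    (hY : ∀ x, HasDerivAt Y (Y₁ x) x)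
    (hY₁ : HasDerivAt Y₁ ((V x₀ - E • (1 : Matrix (Fin n) (Fin n) ℝ)) * Y x₀) x₀)
    (hinv : IsUnit (Y₁ x₀)) :
    HasDerivAt (fun x => Y x * (Y₁ x)⁻¹)
      (1 - (Y x₀ * (Y₁ x₀)⁻¹) * (V x₀ - E • (1 : Matrix (Fin n) (Fin n) ℝ)) *
        (Y x₀ * (Y₁ x₀)⁻¹)) x₀ := by
  set A : Matrix (Fin n) (Fin n) ℝ := (V x₀ - E • (1 : Matrix (Fin n) (Fin n) ℝ)) * Y x₀ with hA
  have hdetU : IsUnit (Y₁ x₀).det := (Matrix.isUnit_iff_isUnit_det _).mp hinv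
  have hdet : (Y₁ x₀).det ≠ 0 := hdetU.ne_zero
  have hentries : ∀ i j, DifferentiableAt ℝ (fun x => Y₁ x i j) x₀ :=
    fun i j => (entry_hasDerivAt hY₁ i j).differentiableAt
  have hZdiff : DifferentiableAt ℝ (fun x => (Y₁ x)⁻¹) x₀ :=
    inv_differentiableAt hentries hdet
  set Z : Matrix (Fin n) (Fin n) ℝ := (Y₁ x₀)⁻¹ with hZ
  set W : Matrix (Fin n) (Fin n) ℝ := deriv (fun x => (Y₁ x)⁻¹) x₀ with hWdef
  have hW : HasDerivAt (fun x => (Y₁ x)⁻¹) W x₀ := hZdiff.hasDerivAt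
  -- eventually Z x * Y₁ x = 1
  have hdetcont : ContinuousAt (fun x => (Y₁ x).det) x₀ :=
    (det_differentiableAt hentries).continuousAt
  have hev : ∀ᶠ x in nhds x₀, (Y₁ x)⁻¹ * Y₁ x = 1 := by
    filter_upwards [hdetcont.eventually_ne hdet] with x hx
    exact Matrix.nonsing_inv_mul _ (isUnit_iff_ne_zero.mpr hx)
  have hprod : HasDerivAt (fun x => (Y₁ x)⁻¹ * Y₁ x) (W * Y₁ x₀ + Z * A) x₀ :=
    matmul_hasDerivAt hW hY₁
  have hconst : HasDerivAt (fun x => (Y₁ x)⁻¹ * Y₁ x) 0 x₀ := by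
    have : HasDerivAt (fun _ : ℝ => (1 : Matrix (Fin n) (Fin n) ℝ)) 0 x₀ :=
      hasDerivAt_const _ _
    exact this.congr_of_eventuallyEq (by filter_upwards [hev] with x hx using hx)
  have hsum : W * Y₁ x₀ + Z * A = 0 := hprod.unique hconst
  have hYZ : Y₁ x₀ * Z = 1 := Matrix.mul_nonsing_inv _ hdetU
  have hWeq : W = -(Z * A * Z) := by
    have h1 : W * Y₁ x₀ = -(Z * A) := eq_neg_of_add_eq_zero_left hsum
    calc W = W * (Y₁ x₀ * Z) := by rw [hYZ, mul_one]
    _ = (W * Y₁ x₀) * Z := by rw [mul_assoc]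
    _ = -(Z * A * Z) := by rw [h1, neg_mul]
  have hmain : HasDerivAt (fun x => Y x * (Y₁ x)⁻¹) (Y₁ x₀ * Z + Y x₀ * W) x₀ :=
    matmul_hasDerivAt (hY x₀) hW
  convert hmain using 1
  rw [hYZ, hWeq, hA]
  noncomm_ring
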